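/- arXiv:2511.23190 — 5 statements merged into one kernel-verified Lean document; each statement's English description precedes it below -/
import Mathlib

section
/- For every vertex v = (s_i, s_j, s_k) of the generalized Latin square graph Γ(S) of a finite semigroup S of order n, the degree of v equals 2n − 3 + N_S(s_k) − 2N_R(v) − 2N_C(v). -/
open Finset

variable {S : Type*} [Fintype S] [DecidableEq S]

/-- Two triples agree in exactly one coordinate. -/
def agreeOne (v w : S × S × S) : Prop :=
  (v.1 = w.1 ∧ v.2.1 ≠ w.2.1 ∧ v.2.2 ≠ w.2.2) ∨
  (v.1 ≠ w.1 ∧ v.2.1 = w.2.1 ∧ v.2.2 ≠ w.2.2) ∨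
  (v.1 ≠ w.1 ∧ v.2.1 ≠ w.2.1 ∧ v.2.2 = w.2.2)

/-- The generalized Latin square graph of a multiplication `mul` on `S`:
vertices are triples `(a,b,c)` with `mul a b = c`, two distinct vertices being
adjacent iff they agree in exactly one coordinate. -/
def GLSG (mul : S → S → S) :
    SimpleGraph {v : S × S × S // mul v.1 v.2.1 = v.2.2} where
  Adj v w := v ≠ w ∧ agreeOne v.1 w.1
  symm := by
    constructor
    rintro v w ⟨h1, h2⟩
    refine ⟨h1.symm, ?_⟩
    rcases h2 with ⟨a, b, c⟩ | ⟨a, b, c⟩ | ⟨a, b, c⟩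
    · exact Or.inl ⟨a.symm, b.symm, c.symm⟩
    · exact Or.inr (Or.inl ⟨a.symm, b.symm, c.symm⟩)
    · exact Or.inr (Or.inr ⟨a.symm, b.symm, c.symm⟩)
  loopless := by constructor; rintro v ⟨h1, _⟩; exact h1 rfl

instance (v w : S × S × S) : Decidable (agreeOne v w) := by
  unfold agreeOne; infer_instance

instance (mul : S → S → S) : DecidableRel (GLSG mul).Adj := fun v w =>
  inferInstanceAs (Decidable (v ≠ w ∧ agreeOne v.1 w.1))

/-- `N_S(k)`: the number of ordered pairs `(x,y)` with `x*y = k`. -/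
def NScount (mul : S → S → S) (k : S) : ℕ :=
  (univ.filter fun p : S × S => mul p.1 p.2 = k).card

/-- `N_R(v)` for `v = (i,j,k)`: the number of `t ≠ j` with `i*t = k`. -/
def NRcount (mul : S → S → S) (i j k : S) : ℕ :=
  (univ.filter fun t : S => t ≠ j ∧ mul i t = k).card

/-- `N_C(v)` for `v = (i,j,k)`: the number of `t ≠ i` with `t*j = k`. -/
def NCcount (mul : S → S → S) (i j k : S) : ℕ :=
  (univ.filter fun t : S => t ≠ i ∧ mul t j = k).card

lemma cardFst (i : S) (P : S × S → Prop) [DecidablePred P] :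
    (univ.filter fun p : S × S => p.1 = i ∧ P p).card
      = (univ.filter fun b : S => P (i, b)).card := by
  apply Finset.card_nbij' (fun p => p.2) (fun b => (i, b))
  · rintro ⟨a, b⟩ hp
    simp only [mem_coe, mem_filter, mem_univ, true_and] at hp ⊢
    obtain ⟨h1, h2⟩ := hp; subst h1; exact h2
  · intro b hb
    simp only [mem_coe, mem_filter, mem_univ, true_and] at hb ⊢
    exact hb
  · rintro ⟨a, b⟩ hp
    simp only [mem_coe, mem_filter, mem_univ, true_and] at hp
    obtain ⟨h1, -⟩ := hp; subst h1; rfl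
  · intro b hb; rfl

lemma cardSnd (j : S) (P : S × S → Prop) [DecidablePred P] :
    (univ.filter fun p : S × S => p.2 = j ∧ P p).card
      = (univ.filter fun a : S => P (a, j)).card := by
  apply Finset.card_nbij' (fun p => p.1) (fun a => (a, j))
  · rintro ⟨a, b⟩ hp
    simp only [mem_coe, mem_filter, mem_univ, true_and] at hp ⊢
    obtain ⟨h1, h2⟩ := hp; subst h1; exact h2
  · intro a ha
    simp only [mem_coe, mem_filter, mem_univ, true_and] at ha ⊢
    exact ha
  · rintro ⟨a, b⟩ hp
    simp only [mem_coe, mem_filter, mem_univ, true_and] at hp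
    obtain ⟨h1, -⟩ := hp; subst h1; rfl
  · intro a ha; rfl


/-- Degree formula: `deg v = 2n - 3 + N_S(s_k) - 2 N_R(v) - 2 N_C(v)`. -/
theorem stmt2 (mul : S → S → S)
    (hassoc : ∀ a b c : S, mul (mul a b) c = mul a (mul b c))
    (v : {v : S × S × S // mul v.1 v.2.1 = v.2.2}) :
    ((GLSG mul).degree v : ℤ) =
      2 * Fintype.card S - 3 + NScount mul v.1.2.2
        - 2 * NRcount mul v.1.1 v.1.2.1 v.1.2.2
        - 2 * NCcount mul v.1.1 v.1.2.1 v.1.2.2 := by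
  obtain ⟨⟨i, j, k⟩, hk⟩ := v
  dsimp only at hk ⊢
  subst hk
  -- the three neighbour classes
  have hdeg : (GLSG mul).degree ⟨(i, j, mul i j), rfl⟩ = (univ.filter fun p : S × S =>
      (p.1 = i ∧ (¬p.2 = j ∧ ¬mul p.1 p.2 = mul i j)) ∨
      (p.2 = j ∧ (¬p.1 = i ∧ ¬mul p.1 p.2 = mul i j)) ∨
      (¬p.1 = i ∧ (¬p.2 = j ∧ mul p.1 p.2 = mul i j))).card := by
    rw [show (GLSG mul).degree ⟨(i, j, mul i j), rfl⟩
        = (univ.filter ((GLSG mul).Adj ⟨(i, j, mul i j), rfl⟩)).card from by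
      rw [← SimpleGraph.neighborFinset_eq_filter]; rfl]
    apply Finset.card_nbij' (fun x => (x.1.1, x.1.2.1))
      (fun p => ⟨(p.1, p.2, mul p.1 p.2), rfl⟩)
    · rintro ⟨⟨a, b, c⟩, hc⟩ hx
      simp only [mem_coe, mem_filter, mem_univ, true_and] at hx ⊢
      obtain ⟨-, hag⟩ := hx
      dsimp only at hc
      subst hc
      rcases hag with ⟨h1, h2, h3⟩ | ⟨h1, h2, h3⟩ | ⟨h1, h2, h3⟩
      · exact Or.inl ⟨h1.symm, fun h => h2 h.symm, fun h => h3 h.symm⟩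
      · exact Or.inr (Or.inl ⟨h2.symm, fun h => h1 h.symm, fun h => h3 h.symm⟩)
      · exact Or.inr (Or.inr ⟨fun h => h1 h.symm, fun h => h2 h.symm, h3.symm⟩)
    · rintro ⟨a, b⟩ hp
      simp only [mem_coe, mem_filter, mem_univ, true_and] at hp ⊢
      rcases hp with ⟨h1, h2, h3⟩ | ⟨h1, h2, h3⟩ | ⟨h1, h2, h3⟩
      · refine ⟨?_, Or.inl ⟨h1.symm, fun h => h2 h.symm, fun h => h3 h.symm⟩⟩
        intro h
        simp only [Subtype.mk.injEq, Prod.mk.injEq] at h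
        exact h2 h.2.1.symm
      · refine ⟨?_, Or.inr (Or.inl ⟨fun h => h2 h.symm, h1.symm, fun h => h3 h.symm⟩)⟩
        intro h
        simp only [Subtype.mk.injEq, Prod.mk.injEq] at h
        exact h2 h.1.symm
      · refine ⟨?_, Or.inr (Or.inr ⟨fun h => h1 h.symm, fun h => h2 h.symm, h3.symm⟩)⟩
        intro h
        simp only [Subtype.mk.injEq, Prod.mk.injEq] at h
        exact h1 h.1.symm
    · rintro ⟨⟨a, b, c⟩, hc⟩ -
      dsimp only at hc
      subst hc
      rfl
    · rintro ⟨a, b⟩ -; rfl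
  -- split into three disjoint parts
  have hd1 : Disjoint
      (univ.filter fun p : S × S => p.1 = i ∧ (¬p.2 = j ∧ ¬mul p.1 p.2 = mul i j))
      (univ.filter fun p : S × S =>
        (p.2 = j ∧ (¬p.1 = i ∧ ¬mul p.1 p.2 = mul i j)) ∨
        (¬p.1 = i ∧ (¬p.2 = j ∧ mul p.1 p.2 = mul i j))) := by
    simp only [disjoint_left, mem_filter, mem_univ, true_and]
    rintro p ⟨h1, h2, h3⟩ (⟨g1, g2, g3⟩ | ⟨g1, g2, g3⟩)
    · exact g2 h1
    · exact g1 h1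
  have hd2 : Disjoint
      (univ.filter fun p : S × S => p.2 = j ∧ (¬p.1 = i ∧ ¬mul p.1 p.2 = mul i j))
      (univ.filter fun p : S × S => ¬p.1 = i ∧ (¬p.2 = j ∧ mul p.1 p.2 = mul i j)) := by
    simp only [disjoint_left, mem_filter, mem_univ, true_and]
    rintro p ⟨h1, h2, h3⟩ ⟨g1, g2, g3⟩
    exact h3 g3
  rw [hdeg, filter_or, card_union_of_disjoint hd1, filter_or, card_union_of_disjoint hd2]
  -- evaluate the first two parts
  have hcA := cardFst (S := S) i (fun p => ¬p.2 = j ∧ ¬mul p.1 p.2 = mul i j)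
  have hcB := cardSnd (S := S) j (fun p => ¬p.1 = i ∧ ¬mul p.1 p.2 = mul i j)
  dsimp only at hcA hcB
  -- row count split
  have e1 := Finset.card_filter_add_card_filter_not
    (s := univ.filter fun b : S => ¬b = j) (p := fun b => mul i b = mul i j)
  rw [filter_filter, filter_filter] at e1
  have e1' : (univ.filter fun b : S => ¬b = j).card = Fintype.card S - 1 := by
    have : (univ.filter fun b : S => ¬b = j) = univ.erase j := by
      ext b; simp [Finset.mem_erase]
    rw [this, card_erase_of_mem (mem_univ j), card_univ]
  -- column count split
  have e2 := Finset.card_filter_add_card_filter_not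
    (s := univ.filter fun a : S => ¬a = i) (p := fun a => mul a j = mul i j)
  rw [filter_filter, filter_filter] at e2
  have e2' : (univ.filter fun a : S => ¬a = i).card = Fintype.card S - 1 := by
    have : (univ.filter fun a : S => ¬a = i) = univ.erase i := by
      ext a; simp [Finset.mem_erase]
    rw [this, card_erase_of_mem (mem_univ i), card_univ]
  -- NS split by first coordinate
  have f1 := Finset.card_filter_add_card_filter_not
    (s := univ.filter fun p : S × S => mul p.1 p.2 = mul i j) (p := fun p => p.1 = i)
  rw [filter_filter, filter_filter] at f1
  have g1 : (univ.filter fun p : S × S => mul p.1 p.2 = mul i j ∧ p.1 = i)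
      = (univ.filter fun p : S × S => p.1 = i ∧ mul p.1 p.2 = mul i j) := by
    ext p; simp only [mem_filter, mem_univ, true_and]; tauto
  have hcI := cardFst (S := S) i (fun p => mul p.1 p.2 = mul i j)
  dsimp only at hcI
  -- split {b : mul i b = mul i j} by b = j
  have f2 := Finset.card_filter_add_card_filter_not
    (s := univ.filter fun b : S => mul i b = mul i j) (p := fun b => b = j)
  rw [filter_filter, filter_filter] at f2
  have g2 : (univ.filter fun b : S => mul i b = mul i j ∧ b = j) = {j} := by
    ext b
    simp only [mem_filter, mem_univ, true_and, mem_singleton]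
    constructor
    · rintro ⟨-, h⟩; exact h
    · rintro rfl; exact ⟨rfl, rfl⟩
  -- split the "a ≠ i" part of NS by second coordinate
  have f3 := Finset.card_filter_add_card_filter_not
    (s := univ.filter fun p : S × S => mul p.1 p.2 = mul i j ∧ ¬p.1 = i)
    (p := fun p => p.2 = j)
  rw [filter_filter, filter_filter] at f3
  have g3 : (univ.filter fun p : S × S => (mul p.1 p.2 = mul i j ∧ ¬p.1 = i) ∧ p.2 = j)
      = (univ.filter fun p : S × S => p.2 = j ∧ (¬p.1 = i ∧ mul p.1 p.2 = mul i j)) := by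
    ext p; simp only [mem_filter, mem_univ, true_and]; tauto
  have g4 : (univ.filter fun p : S × S => (mul p.1 p.2 = mul i j ∧ ¬p.1 = i) ∧ ¬p.2 = j)
      = (univ.filter fun p : S × S => ¬p.1 = i ∧ (¬p.2 = j ∧ mul p.1 p.2 = mul i j)) := by
    ext p; simp only [mem_filter, mem_univ, true_and]; tauto
  have hcJ := cardSnd (S := S) j (fun p => ¬p.1 = i ∧ mul p.1 p.2 = mul i j)
  dsimp only at hcJ
  -- identify NR, NC, NS with the relevant filters
  have hNR : NRcount mul i j (mul i j)
      = (univ.filter fun b : S => ¬b = j ∧ mul i b = mul i j).card := by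
    unfold NRcount; congr 1
  have hNC : NCcount mul i j (mul i j)
      = (univ.filter fun a : S => ¬a = i ∧ mul a j = mul i j).card := by
    unfold NCcount; congr 1
  have hNS : NScount mul (mul i j)
      = (univ.filter fun p : S × S => mul p.1 p.2 = mul i j).card := rfl
  have hmjb : (univ.filter fun b : S => mul i b = mul i j ∧ ¬b = j).card
      = (univ.filter fun b : S => ¬b = j ∧ mul i b = mul i j).card := by
    congr 1; ext b; simp only [mem_filter, mem_univ, true_and]; tauto
  rw [g1] at f1
  rw [g2, card_singleton] at f2
  rw [g3, g4] at f3
  rw [hcI] at f1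
  rw [hcJ] at f3
  have : Nonempty S := ⟨i⟩
  have hcard : 1 ≤ Fintype.card S := Fintype.card_pos
  -- final arithmetic
  rw [hcA, hcB]
  have hNCeq : (univ.filter fun a : S => ¬a = i ∧ mul a j = mul i j).card
      = NCcount mul i j (mul i j) := hNC.symm
  have hNReq : (univ.filter fun b : S => ¬b = j ∧ mul i b = mul i j).card
      = NRcount mul i j (mul i j) := hNR.symm
  rw [hNS]
  omega
end

section
/- The generalized Latin square graph Γ(S) of a finite semigroup S of order n is regular if and only if the quantity Q(v) = N_S(s_k) − 2N_R(v) − 2N_C(v) is constant over all vertices v = (s_i, s_j, s_k) of Γ(S). -/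
open Finset

variable {S : Type*} [Fintype S] [DecidableEq S]

abbrev GLSGVert (mul : S → S → S) := {v : S × S × S // mul v.1 v.2.1 = v.2.2}

section Aux

variable (mul : S → S → S)



lemma cardA_aux (i j k : S) :
    (univ.filter fun w : GLSGVert mul => w.1.1 = i ∧ w.1.2.1 ≠ j ∧ w.1.2.2 ≠ k).card
    + NRcount mul i j k + 1 = Fintype.card S := by
  have h1 : (univ.filter fun w : GLSGVert mul => w.1.1 = i ∧ w.1.2.1 ≠ j ∧ w.1.2.2 ≠ k).card
      = (univ.filter fun b : S => b ≠ j ∧ mul i b ≠ k).card := by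
    apply Finset.card_nbij' (fun w => w.1.2.1) (fun b => ⟨(i, b, mul i b), rfl⟩)
    · intro w hw
      simp only [mem_coe, mem_filter, mem_univ, true_and] at hw ⊢
      obtain ⟨e1, e2, e3⟩ := hw
      refine ⟨e2, ?_⟩
      rw [← e1, w.2]
      exact e3
    · intro b hb
      simp only [mem_coe, mem_filter, mem_univ, true_and] at hb ⊢
      exact hb
    · intro w hw
      simp only [mem_coe, mem_filter, mem_univ, true_and] at hw
      apply Subtype.ext
      have h2 := w.2
      obtain ⟨e1, -, -⟩ := hw
      subst e1
      exact Prod.ext rfl (Prod.ext rfl h2)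
    · intro b _; rfl
  have h2 : (univ.filter fun b : S => b ≠ j ∧ mul i b ≠ k)
      ∪ (univ.filter fun t : S => t ≠ j ∧ mul i t = k) = univ.filter (· ≠ j) := by
    ext b; simp only [mem_union, mem_filter, mem_univ, true_and]; tauto
  have hdisj : Disjoint (univ.filter fun b : S => b ≠ j ∧ mul i b ≠ k)
      (univ.filter fun t : S => t ≠ j ∧ mul i t = k) := by
    rw [Finset.disjoint_left]
    intro b hb hb'
    simp only [mem_filter, mem_univ, true_and] at hb hb'
    exact hb.2 hb'.2
  have h3 : (univ.filter (· ≠ j) : Finset S).card + 1 = Fintype.card S := by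
    rw [Finset.filter_ne']
    rw [Finset.card_erase_add_one (mem_univ j), Finset.card_univ]
  rw [h1, NRcount, ← h3, ← h2, Finset.card_union_of_disjoint hdisj]

lemma cardB_aux (i j k : S) :
    (univ.filter fun w : GLSGVert mul => w.1.1 ≠ i ∧ w.1.2.1 = j ∧ w.1.2.2 ≠ k).card
    + NCcount mul i j k + 1 = Fintype.card S := by
  have h1 : (univ.filter fun w : GLSGVert mul => w.1.1 ≠ i ∧ w.1.2.1 = j ∧ w.1.2.2 ≠ k).card
      = (univ.filter fun a : S => a ≠ i ∧ mul a j ≠ k).card := by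
    apply Finset.card_nbij' (fun w => w.1.1) (fun a => ⟨(a, j, mul a j), rfl⟩)
    · intro w hw
      simp only [mem_coe, mem_filter, mem_univ, true_and] at hw ⊢
      obtain ⟨e1, e2, e3⟩ := hw
      refine ⟨e1, ?_⟩
      rw [← e2, w.2]
      exact e3
    · intro a ha
      simp only [mem_coe, mem_filter, mem_univ, true_and] at ha ⊢
      exact ha
    · intro w hw
      simp only [mem_coe, mem_filter, mem_univ, true_and] at hw
      apply Subtype.ext
      have h2 := w.2
      obtain ⟨-, e2, -⟩ := hw
      refine Prod.ext rfl (Prod.ext e2.symm ?_)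
      simp only
      rw [← e2]
      exact h2
    · intro a _; rfl
  have h2 : (univ.filter fun a : S => a ≠ i ∧ mul a j ≠ k)
      ∪ (univ.filter fun t : S => t ≠ i ∧ mul t j = k) = univ.filter (· ≠ i) := by
    ext a; simp only [mem_union, mem_filter, mem_univ, true_and]; tauto
  have hdisj : Disjoint (univ.filter fun a : S => a ≠ i ∧ mul a j ≠ k)
      (univ.filter fun t : S => t ≠ i ∧ mul t j = k) := by
    rw [Finset.disjoint_left]
    intro a ha ha'
    simp only [mem_filter, mem_univ, true_and] at ha ha'
    exact ha.2 ha'.2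
  have h3 : (univ.filter (· ≠ i) : Finset S).card + 1 = Fintype.card S := by
    rw [Finset.filter_ne']
    rw [Finset.card_erase_add_one (mem_univ i), Finset.card_univ]
  rw [h1, NCcount, ← h3, ← h2, Finset.card_union_of_disjoint hdisj]

lemma cardC_aux (i j k : S) (hij : mul i j = k) :
    (univ.filter fun w : GLSGVert mul => w.1.1 ≠ i ∧ w.1.2.1 ≠ j ∧ w.1.2.2 = k).card
    + NRcount mul i j k + NCcount mul i j k + 1 = NScount mul k := by
  -- C-set card = pairs with ab=k, a≠i, b≠j
  have h1 : (univ.filter fun w : GLSGVert mul => w.1.1 ≠ i ∧ w.1.2.1 ≠ j ∧ w.1.2.2 = k).card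
      = (univ.filter fun p : S × S => mul p.1 p.2 = k ∧ p.1 ≠ i ∧ p.2 ≠ j).card := by
    apply Finset.card_nbij' (fun w => (w.1.1, w.1.2.1))
        (fun p => ⟨(p.1, p.2, mul p.1 p.2), rfl⟩)
    · intro w hw
      simp only [mem_coe, mem_filter, mem_univ, true_and] at hw ⊢
      obtain ⟨e1, e2, e3⟩ := hw
      rw [w.2]
      exact ⟨e3, e1, e2⟩
    · intro p hp
      simp only [mem_coe, mem_filter, mem_univ, true_and] at hp ⊢
      exact ⟨hp.2.1, hp.2.2, hp.1⟩
    · intro w hw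
      apply Subtype.ext
      exact Prod.ext rfl (Prod.ext rfl w.2)
    · intro p _; rfl
  -- pairs with ab=k, a=i ↔ b with ib=k, whose card is NR+1
  have h2 : (univ.filter fun p : S × S => mul p.1 p.2 = k ∧ p.1 = i).card
      = NRcount mul i j k + 1 := by
    have e1 : (univ.filter fun p : S × S => mul p.1 p.2 = k ∧ p.1 = i).card
        = (univ.filter fun b : S => mul i b = k).card := by
      apply Finset.card_nbij' (fun p => p.2) (fun b => (i, b))
      · intro p hp
        simp only [mem_coe, mem_filter, mem_univ, true_and] at hp ⊢
        rw [← hp.2]; exact hp.1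
      · intro b hb
        simp only [mem_coe, mem_filter, mem_univ, true_and] at hb ⊢
        exact ⟨hb, trivial⟩
      · intro p hp
        simp only [mem_coe, mem_filter, mem_univ, true_and] at hp
        exact Prod.ext hp.2.symm rfl
      · intro b _; rfl
    have e2 : (univ.filter fun b : S => mul i b = k)
        = (univ.filter fun b : S => b ≠ j ∧ mul i b = k) ∪ {j} := by
      ext b
      simp only [mem_union, mem_filter, mem_univ, true_and, mem_singleton]
      constructor
      · intro h
        by_cases hb : b = j
        · exact Or.inr hb
        · exact Or.inl ⟨hb, h⟩
      · rintro (⟨-, h⟩ | rfl)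
        · exact h
        · exact hij
    have e3 : Disjoint (univ.filter fun b : S => b ≠ j ∧ mul i b = k) ({j} : Finset S) := by
      rw [Finset.disjoint_left]
      intro b hb hb'
      simp only [mem_filter, mem_univ, true_and] at hb
      simp only [mem_singleton] at hb'
      exact hb.1 hb'
    rw [e1, e2, Finset.card_union_of_disjoint e3, NRcount, Finset.card_singleton]
  -- pairs with ab=k, a≠i, b=j ↔ NC
  have h3 : (univ.filter fun p : S × S => mul p.1 p.2 = k ∧ p.1 ≠ i ∧ p.2 = j).card
      = NCcount mul i j k := by
    apply Finset.card_nbij' (fun p => p.1) (fun a => (a, j))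
    · intro p hp
      simp only [mem_coe, mem_filter, mem_univ, true_and] at hp ⊢
      refine ⟨hp.2.1, ?_⟩
      rw [← hp.2.2]; exact hp.1
    · intro a ha
      simp only [mem_coe, NCcount, mem_filter, mem_univ, true_and] at ha ⊢
      exact ⟨ha.2, ha.1, trivial⟩
    · intro p hp
      simp only [mem_coe, mem_filter, mem_univ, true_and] at hp
      exact Prod.ext rfl hp.2.2.symm
    · intro a _; rfl
  -- split NS
  have s1 : (univ.filter fun p : S × S => mul p.1 p.2 = k)
      = (univ.filter fun p : S × S => mul p.1 p.2 = k ∧ p.1 = i)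
        ∪ ((univ.filter fun p : S × S => mul p.1 p.2 = k ∧ p.1 ≠ i ∧ p.2 = j)
          ∪ (univ.filter fun p : S × S => mul p.1 p.2 = k ∧ p.1 ≠ i ∧ p.2 ≠ j)) := by
    ext p
    simp only [mem_union, mem_filter, mem_univ, true_and]
    tauto
  have d1 : Disjoint (univ.filter fun p : S × S => mul p.1 p.2 = k ∧ p.1 ≠ i ∧ p.2 = j)
      (univ.filter fun p : S × S => mul p.1 p.2 = k ∧ p.1 ≠ i ∧ p.2 ≠ j) := by
    rw [Finset.disjoint_left]
    intro p hp hp'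
    simp only [mem_filter, mem_univ, true_and] at hp hp'
    exact hp'.2.2 hp.2.2
  have d2 : Disjoint (univ.filter fun p : S × S => mul p.1 p.2 = k ∧ p.1 = i)
      ((univ.filter fun p : S × S => mul p.1 p.2 = k ∧ p.1 ≠ i ∧ p.2 = j)
        ∪ (univ.filter fun p : S × S => mul p.1 p.2 = k ∧ p.1 ≠ i ∧ p.2 ≠ j)) := by
    rw [Finset.disjoint_left]
    intro p hp hp'
    simp only [mem_union, mem_filter, mem_univ, true_and] at hp hp'
    rcases hp' with h | h
    · exact h.2.1 hp.2
    · exact h.2.1 hp.2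
  have := congrArg Finset.card s1
  rw [Finset.card_union_of_disjoint d2, Finset.card_union_of_disjoint d1] at this
  rw [h1, NScount, this, h2, h3]
  have hcomm : ∀ p : S × S, (mul p.1 p.2 = k ∧ p.1 ≠ i ∧ p.2 ≠ j)
      ↔ (mul p.1 p.2 = k ∧ p.1 ≠ i ∧ p.2 ≠ j) := fun _ => Iff.rfl
  omega

lemma degree_eq (v : GLSGVert mul) :
    (GLSG mul).degree v + 2 * NRcount mul v.1.1 v.1.2.1 v.1.2.2
      + 2 * NCcount mul v.1.1 v.1.2.1 v.1.2.2 + 3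
    = NScount mul v.1.2.2 + 2 * Fintype.card S := by
  obtain ⟨⟨i, j, k⟩, hv⟩ := v
  simp only at hv ⊢
  have hadj : ∀ w : GLSGVert mul, (GLSG mul).Adj ⟨(i, j, k), hv⟩ w ↔ agreeOne (i, j, k) w.1 := by
    intro w
    constructor
    · exact fun h => h.2
    · intro h
      refine ⟨fun he => ?_, h⟩
      rw [← he] at h
      rcases h with ⟨-, hb, -⟩ | ⟨ha, -, -⟩ | ⟨ha, -, -⟩
      · exact hb rfl
      · exact ha rfl
      · exact ha rfl
  have hdeg : (GLSG mul).degree ⟨(i, j, k), hv⟩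
      = (univ.filter fun w : GLSGVert mul => agreeOne (i, j, k) w.1).card := by
    rw [← SimpleGraph.card_neighborFinset_eq_degree]
    congr 1
    ext w
    simp only [SimpleGraph.mem_neighborFinset, mem_filter, mem_univ, true_and]
    exact hadj w
  have hsplit : (univ.filter fun w : GLSGVert mul => agreeOne (i, j, k) w.1)
      = (univ.filter fun w : GLSGVert mul => w.1.1 = i ∧ w.1.2.1 ≠ j ∧ w.1.2.2 ≠ k)
        ∪ ((univ.filter fun w : GLSGVert mul => w.1.1 ≠ i ∧ w.1.2.1 = j ∧ w.1.2.2 ≠ k)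
          ∪ (univ.filter fun w : GLSGVert mul => w.1.1 ≠ i ∧ w.1.2.1 ≠ j ∧ w.1.2.2 = k)) := by
    ext w
    simp only [mem_union, mem_filter, mem_univ, true_and]
    simp only [agreeOne, ne_eq]
    constructor
    · rintro (⟨a, b, c⟩ | ⟨a, b, c⟩ | ⟨a, b, c⟩)
      · exact Or.inl ⟨a.symm, fun h => b h.symm, fun h => c h.symm⟩
      · exact Or.inr (Or.inl ⟨fun h => a h.symm, b.symm, fun h => c h.symm⟩)
      · exact Or.inr (Or.inr ⟨fun h => a h.symm, fun h => b h.symm, c.symm⟩)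
    · rintro (⟨a, b, c⟩ | ⟨a, b, c⟩ | ⟨a, b, c⟩)
      · exact Or.inl ⟨a.symm, fun h => b h.symm, fun h => c h.symm⟩
      · exact Or.inr (Or.inl ⟨fun h => a h.symm, b.symm, fun h => c h.symm⟩)
      · exact Or.inr (Or.inr ⟨fun h => a h.symm, fun h => b h.symm, c.symm⟩)
  have d1 : Disjoint (univ.filter fun w : GLSGVert mul => w.1.1 ≠ i ∧ w.1.2.1 = j ∧ w.1.2.2 ≠ k)
      (univ.filter fun w : GLSGVert mul => w.1.1 ≠ i ∧ w.1.2.1 ≠ j ∧ w.1.2.2 = k) := by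
    rw [Finset.disjoint_left]
    intro w hw hw'
    simp only [mem_filter, mem_univ, true_and] at hw hw'
    exact hw'.2.1 hw.2.1
  have d2 : Disjoint (univ.filter fun w : GLSGVert mul => w.1.1 = i ∧ w.1.2.1 ≠ j ∧ w.1.2.2 ≠ k)
      ((univ.filter fun w : GLSGVert mul => w.1.1 ≠ i ∧ w.1.2.1 = j ∧ w.1.2.2 ≠ k)
        ∪ (univ.filter fun w : GLSGVert mul => w.1.1 ≠ i ∧ w.1.2.1 ≠ j ∧ w.1.2.2 = k)) := by
    rw [Finset.disjoint_left]
    intro w hw hw'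
    simp only [mem_union, mem_filter, mem_univ, true_and] at hw hw'
    rcases hw' with h | h
    · exact h.1 hw.1
    · exact h.1 hw.1
  have hA := cardA_aux mul i j k
  have hB := cardB_aux mul i j k
  have hC := cardC_aux mul i j k hv
  rw [hdeg, hsplit, Finset.card_union_of_disjoint d2, Finset.card_union_of_disjoint d1]
  omega

end Aux

/-- `Γ(S)` is regular iff `Q(v) = N_S(s_k) - 2N_R(v) - 2N_C(v)` is constant. -/
theorem stmt3 (mul : S → S → S)
    (hassoc : ∀ a b c : S, mul (mul a b) c = mul a (mul b c)) :
    (∃ d, (GLSG mul).IsRegularOfDegree d) ↔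
      (∃ q : ℤ, ∀ v : {v : S × S × S // mul v.1 v.2.1 = v.2.2},
        (NScount mul v.1.2.2 : ℤ)
          - 2 * NRcount mul v.1.1 v.1.2.1 v.1.2.2
          - 2 * NCcount mul v.1.1 v.1.2.1 v.1.2.2 = q) := by
  have key : ∀ v : {v : S × S × S // mul v.1 v.2.1 = v.2.2},
      ((GLSG mul).degree v : ℤ)
        = (NScount mul v.1.2.2 : ℤ)
          - 2 * NRcount mul v.1.1 v.1.2.1 v.1.2.2
          - 2 * NCcount mul v.1.1 v.1.2.1 v.1.2.2
          + 2 * Fintype.card S - 3 := by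
    intro v
    have := degree_eq mul v
    omega
  constructor
  · rintro ⟨d, hd⟩
    refine ⟨(d : ℤ) - 2 * Fintype.card S + 3, fun v => ?_⟩
    have h1 := key v
    rw [hd v] at h1
    omega
  · rintro ⟨q, hq⟩
    by_cases hne : Nonempty {v : S × S × S // mul v.1 v.2.1 = v.2.2}
    · obtain ⟨v0⟩ := hne
      refine ⟨(GLSG mul).degree v0, fun v => ?_⟩
      have h1 := key v
      have h2 := key v0
      have h3 := hq v
      have h4 := hq v0
      omega
    · exact ⟨0, fun v => absurd ⟨v⟩ hne⟩
end

section
/- Let S be a finite semigroup of order s, and suppose there exist elements z_0, z_1 ∈ S that both occur as products (i.e., are values of the multiplication), with N_S(z_0) − N_S(z_1) > 4(s − 1). Then the function Q(v) = N_S(s_k) − 2N_R(v) − 2N_C(v) is not constant on the vertices of Γ(S), and hence Γ(S) is not regular. -/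
open Finset

variable {S : Type*} [Fintype S] [DecidableEq S]

section Aux

variable {S : Type*} [Fintype S] [DecidableEq S] (mul : S → S → S)

lemma NR_succ_le (i j k : S) : NRcount mul i j k + 1 ≤ Fintype.card S := by
  unfold NRcount
  have hj : j ∉ (univ.filter fun t : S => t ≠ j ∧ mul i t = k) := by simp
  have hle := Finset.card_le_card
    (subset_univ (insert j (univ.filter fun t : S => t ≠ j ∧ mul i t = k)))
  rw [Finset.card_insert_of_notMem hj, Finset.card_univ] at hle
  exact hle

lemma NC_succ_le (i j k : S) : NCcount mul i j k + 1 ≤ Fintype.card S := by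
  unfold NCcount
  have hj : i ∉ (univ.filter fun t : S => t ≠ i ∧ mul t j = k) := by simp
  have hle := Finset.card_le_card
    (subset_univ (insert i (univ.filter fun t : S => t ≠ i ∧ mul t j = k)))
  rw [Finset.card_insert_of_notMem hj, Finset.card_univ] at hle
  exact hle

/-- The neighbour set of `v` realised inside `S × S × S`. -/
def Wfin (v : S × S × S) : Finset (S × S × S) :=
  univ.filter fun w => mul w.1 w.2.1 = w.2.2 ∧ w ≠ v ∧ agreeOne v w

lemma deg_eq_W (v : {v : S × S × S // mul v.1 v.2.1 = v.2.2}) :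
    (GLSG mul).degree v = (Wfin mul v.val).card := by
  rw [SimpleGraph.degree]
  refine Finset.card_bij
    (fun (w : {v : S × S × S // mul v.1 v.2.1 = v.2.2}) _ => w.val) ?_ ?_ ?_
  · intro a ha
    rw [SimpleGraph.mem_neighborFinset] at ha
    obtain ⟨hne, hag⟩ := ha
    simp only [Wfin, mem_filter, mem_univ, true_and]
    exact ⟨a.2, fun hh => hne (Subtype.ext hh).symm, hag⟩
  · intro a _ b _ hab
    exact Subtype.ext hab
  · intro b hb
    simp only [Wfin, mem_filter, mem_univ, true_and] at hb
    obtain ⟨hv, hne, hag⟩ := hb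
    refine ⟨⟨b, hv⟩, ?_, rfl⟩
    rw [SimpleGraph.mem_neighborFinset]
    exact ⟨fun hh => hne (congrArg Subtype.val hh).symm, hag⟩

/-- Pairs `(a,b)` with `a*b = k`, `a ≠ i`, `b ≠ j`. -/
def P3fin (i j k : S) : Finset (S × S) :=
  univ.filter fun p => mul p.1 p.2 = k ∧ p.1 ≠ i ∧ p.2 ≠ j

lemma P3_le_deg (i j k : S) (h : mul i j = k) :
    (P3fin mul i j k).card ≤ (GLSG mul).degree ⟨(i, j, k), h⟩ := by
  rw [deg_eq_W]
  apply Finset.card_le_card_of_injOn (fun p => (p.1, p.2, k))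
  · intro p hp
    simp only [Finset.mem_coe, P3fin, mem_filter, mem_univ, true_and] at hp
    obtain ⟨hm, ha, hb⟩ := hp
    simp only [Finset.mem_coe, Wfin, mem_filter, mem_univ, true_and]
    refine ⟨hm, ?_, Or.inr (Or.inr ⟨fun hh => ha hh.symm, fun hh => hb hh.symm, rfl⟩)⟩
    intro hh
    exact ha (congrArg Prod.fst hh)
  · intro p _ q _ hpq
    dsimp only at hpq
    simp only [Prod.mk.injEq] at hpq
    exact Prod.ext hpq.1 hpq.2.1

lemma P3_succ_le_NS (i j k : S) (h : mul i j = k) :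
    (P3fin mul i j k).card + 1 ≤ NScount mul k := by
  have hij : (i, j) ∉ P3fin mul i j k := by simp [P3fin]
  have hcard := Finset.card_insert_of_notMem hij
  have hsub : insert (i, j) (P3fin mul i j k) ⊆
      univ.filter fun p : S × S => mul p.1 p.2 = k := by
    intro p hp
    rcases Finset.mem_insert.1 hp with rfl | hp
    · simp [h]
    · simp only [P3fin, mem_filter, mem_univ, true_and] at hp ⊢
      exact hp.1
  have := Finset.card_le_card hsub
  rw [hcard] at this
  simpa [NScount, add_comm] using this

lemma NS_le_P3 (i j k : S) (h : mul i j = k) :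
    NScount mul k ≤ (P3fin mul i j k).card + (NRcount mul i j k + 1)
      + NCcount mul i j k := by
  classical
  set A : Finset (S × S) := univ.filter fun p : S × S => mul p.1 p.2 = k ∧ p.1 = i with hA
  set B : Finset (S × S) :=
    univ.filter fun p : S × S => mul p.1 p.2 = k ∧ p.1 ≠ i ∧ p.2 = j with hB
  have hsub : (univ.filter fun p : S × S => mul p.1 p.2 = k) ⊆ P3fin mul i j k ∪ A ∪ B := by
    intro p hp
    simp only [mem_filter, mem_univ, true_and] at hp
    by_cases h1 : p.1 = i
    · refine Finset.mem_union_left _ (Finset.mem_union_right _ ?_)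
      simp only [hA, mem_filter, mem_univ, true_and]
      exact ⟨hp, h1⟩
    · by_cases h2 : p.2 = j
      · refine Finset.mem_union_right _ ?_
        simp only [hB, mem_filter, mem_univ, true_and]
        exact ⟨hp, h1, h2⟩
      · refine Finset.mem_union_left _ (Finset.mem_union_left _ ?_)
        simp only [P3fin, mem_filter, mem_univ, true_and]
        exact ⟨hp, h1, h2⟩
  have hAcard : A.card = NRcount mul i j k + 1 := by
    have hbij : A.card = (univ.filter fun t : S => mul i t = k).card := by
      refine Finset.card_bij (fun (p : S × S) _ => p.2) ?_ ?_ ?_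
      · intro p hp
        simp only [hA, mem_filter, mem_univ, true_and] at hp
        simp only [mem_filter, mem_univ, true_and]
        rw [← hp.2]
        exact hp.1
      · intro p hp q hq hpq
        simp only [hA, mem_filter, mem_univ, true_and] at hp hq
        exact Prod.ext (hp.2.trans hq.2.symm) hpq
      · intro t ht
        simp only [mem_filter, mem_univ, true_and] at ht
        refine ⟨(i, t), ?_, rfl⟩
        simp [hA, ht]
    have hj' : j ∉ (univ.filter fun t : S => t ≠ j ∧ mul i t = k) := by simp
    have hins : insert j (univ.filter fun t : S => t ≠ j ∧ mul i t = k)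
        = univ.filter fun t : S => mul i t = k := by
      ext t
      simp only [Finset.mem_insert, mem_filter, mem_univ, true_and]
      constructor
      · rintro (rfl | ⟨_, ht⟩)
        · exact h
        · exact ht
      · intro ht
        by_cases htj : t = j
        · exact Or.inl htj
        · exact Or.inr ⟨htj, ht⟩
    rw [hbij, ← hins, Finset.card_insert_of_notMem hj', NRcount, add_comm]
  have hBcard : B.card ≤ NCcount mul i j k := by
    apply Finset.card_le_card_of_injOn (fun p => p.1)
    · intro p hp
      simp only [Finset.mem_coe, hB, mem_filter, mem_univ, true_and] at hp
      simp only [Finset.mem_coe, NCcount, mem_filter, mem_univ, true_and]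
      refine ⟨hp.2.1, ?_⟩
      rw [← hp.2.2]
      exact hp.1
    · intro p hp q hq hpq
      simp only [hB, coe_filter, Set.mem_setOf_eq, mem_univ, true_and] at hp hq
      dsimp only at hpq
      exact Prod.ext hpq (hp.2.2.trans hq.2.2.symm)
  calc NScount mul k ≤ (P3fin mul i j k ∪ A ∪ B).card := Finset.card_le_card hsub
    _ ≤ (P3fin mul i j k ∪ A).card + B.card := Finset.card_union_le _ _
    _ ≤ (P3fin mul i j k).card + A.card + B.card :=
        add_le_add_left (Finset.card_union_le _ _) _
    _ ≤ _ := by rw [hAcard]; exact add_le_add_right hBcard _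

lemma deg_upper (i j k : S) (h : mul i j = k) :
    (GLSG mul).degree ⟨(i, j, k), h⟩ + 3 ≤ 2 * Fintype.card S + NScount mul k := by
  classical
  set W1 : Finset (S × S × S) :=
    univ.filter fun w => mul w.1 w.2.1 = w.2.2 ∧ w.1 = i ∧ w.2.1 ≠ j ∧ w.2.2 ≠ k with hW1
  set W2 : Finset (S × S × S) :=
    univ.filter fun w => mul w.1 w.2.1 = w.2.2 ∧ w.1 ≠ i ∧ w.2.1 = j ∧ w.2.2 ≠ k with hW2
  set W3 : Finset (S × S × S) :=
    univ.filter fun w => mul w.1 w.2.1 = w.2.2 ∧ w.1 ≠ i ∧ w.2.1 ≠ j ∧ w.2.2 = k with hW3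
  have hsub : Wfin mul (i, j, k) ⊆ W1 ∪ W2 ∪ W3 := by
    intro w hw
    simp only [Wfin, mem_filter, mem_univ, true_and] at hw
    obtain ⟨hm, _, hag⟩ := hw
    rcases hag with ⟨x, y, z⟩ | ⟨x, y, z⟩ | ⟨x, y, z⟩
    · refine Finset.mem_union_left _ (Finset.mem_union_left _ ?_)
      simp only [hW1, mem_filter, mem_univ, true_and]
      exact ⟨hm, x.symm, fun hh => y hh.symm, fun hh => z hh.symm⟩
    · refine Finset.mem_union_left _ (Finset.mem_union_right _ ?_)
      simp only [hW2, mem_filter, mem_univ, true_and]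
      exact ⟨hm, fun hh => x hh.symm, y.symm, fun hh => z hh.symm⟩
    · refine Finset.mem_union_right _ ?_
      simp only [hW3, mem_filter, mem_univ, true_and]
      exact ⟨hm, fun hh => x hh.symm, fun hh => y hh.symm, z.symm⟩
  have hW1card : W1.card + 1 ≤ Fintype.card S := by
    have hnm : (i, j, k) ∉ W1 := by simp [hW1]
    have hins := Finset.card_insert_of_notMem hnm
    have hle : (insert (i, j, k) W1).card ≤ Fintype.card S := by
      rw [← Finset.card_univ]
      apply Finset.card_le_card_of_injOn (fun w => w.2.1) (fun _ _ => mem_univ _)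
      intro p hp q hq hpq
      dsimp only at hpq
      simp only [Finset.coe_insert, Set.mem_insert_iff, hW1, coe_filter,
        Set.mem_setOf_eq, mem_univ, true_and] at hp hq
      rcases hp with rfl | hp <;> rcases hq with rfl | hq
      · rfl
      · exact absurd hpq.symm hq.2.2.1
      · exact absurd hpq hp.2.2.1
      · refine Prod.ext (hp.2.1.trans hq.2.1.symm) (Prod.ext hpq ?_)
        rw [← hp.1, ← hq.1, hp.2.1, hq.2.1, hpq]
    rw [hins] at hle
    omega
  have hW2card : W2.card + 1 ≤ Fintype.card S := by
    have hnm : (i, j, k) ∉ W2 := by simp [hW2]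
    have hins := Finset.card_insert_of_notMem hnm
    have hle : (insert (i, j, k) W2).card ≤ Fintype.card S := by
      rw [← Finset.card_univ]
      apply Finset.card_le_card_of_injOn (fun w => w.1) (fun _ _ => mem_univ _)
      intro p hp q hq hpq
      dsimp only at hpq
      simp only [Finset.coe_insert, Set.mem_insert_iff, hW2, coe_filter,
        Set.mem_setOf_eq, mem_univ, true_and] at hp hq
      rcases hp with rfl | hp <;> rcases hq with rfl | hq
      · rfl
      · exact absurd hpq.symm hq.2.1
      · exact absurd hpq hp.2.1
      · refine Prod.ext hpq (Prod.ext (hp.2.2.1.trans hq.2.2.1.symm) ?_)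
        rw [← hp.1, ← hq.1, hp.2.2.1, hq.2.2.1, hpq]
    rw [hins] at hle
    omega
  have hW3card : W3.card + 1 ≤ NScount mul k := by
    have hle : W3.card ≤ (P3fin mul i j k).card := by
      apply Finset.card_le_card_of_injOn (fun w => (w.1, w.2.1))
      · intro w hw
        simp only [Finset.mem_coe, hW3, mem_filter, mem_univ, true_and] at hw
        simp only [Finset.mem_coe, P3fin, mem_filter, mem_univ, true_and]
        exact ⟨by rw [hw.1]; exact hw.2.2.2, hw.2.1, hw.2.2.1⟩
      · intro p hp q hq hpq
        dsimp only at hpq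
        simp only [Prod.mk.injEq] at hpq
        simp only [hW3, coe_filter, Set.mem_setOf_eq, mem_univ, true_and] at hp hq
        exact Prod.ext hpq.1 (Prod.ext hpq.2 (hp.2.2.2.trans hq.2.2.2.symm))
    have := P3_succ_le_NS mul i j k h
    omega
  have hdeg := deg_eq_W mul ⟨(i, j, k), h⟩
  have hc : (Wfin mul (i, j, k)).card ≤ W1.card + W2.card + W3.card := by
    calc (Wfin mul (i, j, k)).card ≤ (W1 ∪ W2 ∪ W3).card := Finset.card_le_card hsub
      _ ≤ (W1 ∪ W2).card + W3.card := Finset.card_union_le _ _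
      _ ≤ W1.card + W2.card + W3.card := add_le_add_left (Finset.card_union_le _ _) _
  rw [hdeg]
  show (Wfin mul (i, j, k)).card + 3 ≤ 2 * Fintype.card S + NScount mul k
  omega

end Aux

/-- If `z₀, z₁` both occur as products and `N_S(z₀) - N_S(z₁) > 4(s-1)`, then
`Q` is not constant on the vertices of `Γ(S)`, and `Γ(S)` is not regular. -/
theorem stmt11 (mul : S → S → S)
    (hassoc : ∀ a b c : S, mul (mul a b) c = mul a (mul b c))
    (z₀ z₁ : S) (h₀ : ∃ x y : S, mul x y = z₀) (h₁ : ∃ x y : S, mul x y = z₁)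
    (hΔ : (NScount mul z₀ : ℤ) - NScount mul z₁ > 4 * (Fintype.card S - 1)) :
    (¬ ∃ q : ℤ, ∀ v : {v : S × S × S // mul v.1 v.2.1 = v.2.2},
        (NScount mul v.1.2.2 : ℤ)
          - 2 * NRcount mul v.1.1 v.1.2.1 v.1.2.2
          - 2 * NCcount mul v.1.1 v.1.2.1 v.1.2.2 = q) ∧
    ¬ ∃ d, (GLSG mul).IsRegularOfDegree d := by
  constructor
  · rintro ⟨q, hq⟩
    obtain ⟨x₀, y₀, hm0⟩ := h₀
    obtain ⟨x₁, y₁, hm1⟩ := h₁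
    have e0 := hq ⟨(x₀, y₀, z₀), hm0⟩
    have e1 := hq ⟨(x₁, y₁, z₁), hm1⟩
    simp only at e0 e1
    have hr0 := NR_succ_le mul x₀ y₀ z₀
    have hc0 := NC_succ_le mul x₀ y₀ z₀
    have hr0' : (NRcount mul x₀ y₀ z₀ : ℤ) + 1 ≤ Fintype.card S := by exact_mod_cast hr0
    have hc0' : (NCcount mul x₀ y₀ z₀ : ℤ) + 1 ≤ Fintype.card S := by exact_mod_cast hc0
    have hr1 : (0 : ℤ) ≤ NRcount mul x₁ y₁ z₁ := Int.natCast_nonneg _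
    have hc1 : (0 : ℤ) ≤ NCcount mul x₁ y₁ z₁ := Int.natCast_nonneg _
    linarith
  · rintro ⟨d, hd⟩
    obtain ⟨x₀, y₀, hm0⟩ := h₀
    obtain ⟨x₁, y₁, hm1⟩ := h₁
    have hd0 := hd ⟨(x₀, y₀, z₀), hm0⟩
    have hd1 := hd ⟨(x₁, y₁, z₁), hm1⟩
    have hA := NS_le_P3 mul x₀ y₀ z₀ hm0
    have hB := P3_le_deg mul x₀ y₀ z₀ hm0
    rw [hd0] at hB
    have hC := NR_succ_le mul x₀ y₀ z₀
    have hC' := NC_succ_le mul x₀ y₀ z₀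
    have hD := deg_upper mul x₁ y₁ z₁ hm1
    rw [hd1] at hD
    have hnat : NScount mul z₀ + 4 ≤ 4 * Fintype.card S + NScount mul z₁ := by omega
    have hint : (NScount mul z₀ : ℤ) + 4 ≤ 4 * Fintype.card S + NScount mul z₁ := by
      exact_mod_cast hnat
    linarith
end

section
/- If G is a finite group of order m ≥ 1 and |I| = n > 1, then the generalized Latin square graph Γ(B₀(G, I)) of the Brandt semigroup is not regular. -/
open Finset

variable {S : Type*} [Fintype S] [DecidableEq S]

/-- Multiplication of the Brandt semigroup `B₀(G, I)`: elements are `some (i,g,j)`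
together with a zero `none`. -/
def brandtMul {G : Type*} [Mul G] {I : Type*} [DecidableEq I] :
    Option (I × G × I) → Option (I × G × I) → Option (I × G × I)
  | some (i, g, j), some (k, h, l) => if j = k then some (i, g * h, l) else none
  | _, _ => none

set_option synthInstance.maxSize 512

/-- If `|I| > 1`, the generalized Latin square graph of the Brandt semigroup
`B₀(G, I)` is not regular. -/
theorem stmt14 (G : Type*) [Group G] [Fintype G] [DecidableEq G]
    (I : Type*) [Fintype I] [DecidableEq I] (hn : 1 < Fintype.card I) :
    ¬ ∃ d, (GLSG (brandtMul (G := G) (I := I))).IsRegularOfDegree d := by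
  classical
  rintro ⟨d, hd⟩
  obtain ⟨i₀, i₁, hi⟩ := Fintype.exists_pair_of_one_lt_card hn
  set M := brandtMul (G := G) (I := I) with hM
  have hMnone : ∀ x : Option (I × G × I), M x none = none := by
    intro x; cases x <;> rfl
  let c : Option (I × G × I) := some (i₀, 1, i₀)
  let y : Option (I × G × I) := some (i₀, 1, i₁)
  have hv0 : M none none = none := rfl
  have hv1 : M c none = none := rfl
  let v0 : {v : _ × _ × _ // M v.1 v.2.1 = v.2.2} := ⟨(none, none, none), hv0⟩
  let v1 : {v : _ × _ × _ // M v.1 v.2.1 = v.2.2} := ⟨(c, none, none), hv1⟩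
  have hwmul : M c y = y := by simp [hM, brandtMul, c, y]
  let w : {v : _ × _ × _ // M v.1 v.2.1 = v.2.2} := ⟨(c, y, y), hwmul⟩
  -- shape of neighbors of v0
  have hshape : ∀ u : {v : _ × _ × _ // M v.1 v.2.1 = v.2.2},
      u ∈ (GLSG M).neighborFinset v0 →
      u.1.1 ≠ none ∧ u.1.2.1 ≠ none ∧ u.1.2.2 = none := by
    intro u hu
    rw [SimpleGraph.mem_neighborFinset] at hu
    obtain ⟨-, hone⟩ := hu
    rcases hone with ⟨h1, h2, h3⟩ | ⟨h1, h2, h3⟩ | ⟨h1, h2, h3⟩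
    · exfalso
      have := u.2
      rw [← h1] at this
      exact h3 this
    · exfalso
      have := u.2
      rw [← h2, hMnone] at this
      exact h3 this
    · exact ⟨fun h => h1 h.symm, fun h => h2 h.symm, h3.symm⟩
  -- the injection
  let f : {v : _ × _ × _ // M v.1 v.2.1 = v.2.2} → {v : _ × _ × _ // M v.1 v.2.1 = v.2.2} :=
    fun u => if u.1.1 = c then ⟨(none, u.1.2.1, none), rfl⟩ else u
  have hmaps : ∀ u ∈ (GLSG M).neighborFinset v0,
      f u ∈ ((GLSG M).neighborFinset v1).erase w := by
    intro u hu
    obtain ⟨hx, hy, hz⟩ := hshape u hu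
    rw [SimpleGraph.mem_neighborFinset] at hu
    rw [Finset.mem_erase, SimpleGraph.mem_neighborFinset]
    by_cases hc : u.1.1 = c
    · simp only [f, if_pos hc]
      refine ⟨?_, ?_, ?_⟩
      · intro h
        have := congrArg (fun t => t.1.1) h
        simp only at this
        simp [v0, v1, w, c, y] at this
      · intro h
        have := congrArg (fun t => t.1.1) h
        simp only at this
        simp [v0, v1, w, c, y] at this
      · exact Or.inr (Or.inr ⟨fun h => by simp [v0, v1, w, c, y] at h, fun h => hy h.symm, rfl⟩)
    · simp only [f, if_neg hc]
      refine ⟨?_, ?_, ?_⟩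
      · intro h
        have := congrArg (fun t => t.1.2.2) h
        rw [hz] at this
        simp [v0, v1, w, c, y] at this
      · intro h
        have := congrArg (fun t => t.1.1) h
        exact hc this.symm
      · exact Or.inr (Or.inr ⟨fun h => hc h.symm, fun h => hy h.symm, hz.symm⟩)
  have hinj : Set.InjOn f ((GLSG M).neighborFinset v0 : Set _) := by
    intro a ha b hb hab
    obtain ⟨hax, hay, haz⟩ := hshape a (by exact_mod_cast ha)
    obtain ⟨hbx, hby, hbz⟩ := hshape b (by exact_mod_cast hb)
    by_cases hca : a.1.1 = c <;> by_cases hcb : b.1.1 = c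
    · simp only [f, if_pos hca, if_pos hcb] at hab
      have h2 : a.1.2.1 = b.1.2.1 := by
        have := congrArg (fun t => t.1.2.1) hab
        simpa using this
      apply Subtype.ext
      rw [Prod.ext_iff, Prod.ext_iff]
      exact ⟨hca.trans hcb.symm, h2, haz.trans hbz.symm⟩
    · exfalso
      simp only [f, if_pos hca, if_neg hcb] at hab
      have := congrArg (fun t => t.1.1) hab
      simp only at this
      exact hbx this.symm
    · exfalso
      simp only [f, if_neg hca, if_pos hcb] at hab
      have := congrArg (fun t => t.1.1) hab
      simp only at this
      exact hax this
    · simp only [f, if_neg hca, if_neg hcb] at hab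
      exact hab
  have hle : ((GLSG M).neighborFinset v0).card ≤
      (((GLSG M).neighborFinset v1).erase w).card :=
    Finset.card_le_card_of_injOn f hmaps hinj
  have hwmem : w ∈ (GLSG M).neighborFinset v1 := by
    rw [SimpleGraph.mem_neighborFinset]
    refine ⟨?_, ?_⟩
    · intro h
      have := congrArg (fun t => t.1.2.1) h
      simp [v0, v1, w, c, y] at this
    · exact Or.inl ⟨rfl, by intro h; simp [v0, v1, w, c, y] at h,
        by intro h; simp [v0, v1, w, c, y] at h⟩
  have hlt : ((GLSG M).neighborFinset v0).card < ((GLSG M).neighborFinset v1).card :=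
    lt_of_le_of_lt hle (Finset.card_erase_lt_of_mem hwmem)
  have h0 := hd v0
  have h1 := hd v1
  rw [SimpleGraph.degree] at h0 h1
  omega
end

section
/- Let S be a finite null semigroup of order n with zero 0 (i.e., xy = 0 for all x, y ∈ S). Then the map (s_i, s_j, 0) ↦ (s_i, s_j) is a graph isomorphism from Γ(S) onto the tensor product K_n × K_n of two complete graphs on n vertices. -/
open Finset

variable {S : Type*} [Fintype S] [DecidableEq S]

/-- The tensor (categorical) product of two simple graphs: `(u,v)` is adjacent
to `(u',v')` iff `u ~ u'` and `v ~ v'`. -/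
def tensorGraph {α β : Type*} (G : SimpleGraph α) (H : SimpleGraph β) :
    SimpleGraph (α × β) where
  Adj p q := G.Adj p.1 q.1 ∧ H.Adj p.2 q.2
  symm := ⟨fun _ _ ⟨h1, h2⟩ => ⟨G.adj_symm h1, H.adj_symm h2⟩⟩
  loopless := ⟨fun _ ⟨h1, _⟩ => G.irrefl h1⟩

/-- For a null semigroup `S` of order `n` with zero `z`, the map
`(s_i, s_j, 0) ↦ (s_i, s_j)` is a graph isomorphism from `Γ(S)` onto the tensor
product `K_n × K_n` of two complete graphs on `n` vertices. -/
theorem stmt16 (mul : S → S → S) (z : S) (h : ∀ x y : S, mul x y = z) :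
    ∃ φ : GLSG mul ≃g
        tensorGraph (⊤ : SimpleGraph S) (⊤ : SimpleGraph S),
      ∀ v, φ v = (v.1.1, v.1.2.1) := by
  have hz : ∀ v : {v : S × S × S // mul v.1 v.2.1 = v.2.2}, v.1.2.2 = z := by
    rintro ⟨⟨a, b, c⟩, hv⟩
    simpa [h] using hv.symm
  refine ⟨⟨⟨fun v => (v.1.1, v.1.2.1), fun p => ⟨(p.1, p.2, z), h _ _⟩, ?_, ?_⟩, ?_⟩, fun v => rfl⟩
  · rintro ⟨⟨a, b, c⟩, hv⟩
    have : c = z := by simpa [h] using hv.symm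
    simp [this]
  · rintro ⟨a, b⟩; rfl
  · rintro ⟨⟨a, b, c⟩, hv⟩ ⟨⟨a', b', c'⟩, hw⟩
    have hc : c = z := by simpa [h] using hv.symm
    have hc' : c' = z := by simpa [h] using hw.symm
    have hcc : c = c' := hc.trans hc'.symm
    subst hcc
    show (tensorGraph ⊤ ⊤).Adj (a, b) (a', b') ↔ (GLSG mul).Adj ⟨(a, b, c), hv⟩ ⟨(a', b', c), hw⟩
    simp only [tensorGraph, SimpleGraph.top_adj]
    show (a ≠ a' ∧ b ≠ b') ↔ (_ ≠ _ ∧ agreeOne (a,b,c) (a',b',c))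
    constructor
    · rintro ⟨x, y⟩
      refine ⟨?_, Or.inr (Or.inr ⟨x, y, rfl⟩)⟩
      intro e
      exact x (congrArg Prod.fst (congrArg Subtype.val e))
    · rintro ⟨h1, h2⟩
      rcases h2 with ⟨x, y, t⟩ | ⟨x, y, t⟩ | ⟨x, y, t⟩ <;>
        first
          | exact absurd rfl t
          | exact ⟨x, y⟩
end
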